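/- Assume there exists a ∈ (0,∞) with q₀(a) > 0. Then for p = 1: sup_{y∈D_1} |y(x)| = 1 for every x ∈ ℝ; in particular, the solutions of the equation do not tend in whole to zero as |x| → ∞. -/

import Mathlib

open MeasureTheory Filter Topology
open scoped ENNReal

/-- `y` is a solution of `-y' + q y = f` on `ℝ`: it is locally absolutely
continuous and its a.e. derivative `y'` equals `q y - f`. -/
def IsSolution (q f y : ℝ → ℝ) : Prop :=
  LocallyIntegrable (fun t => q t * y t - f t) volume ∧
  ∀ a b : ℝ, y b - y a = ∫ t in a..b, (q t * y t - f t)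

/-- The set `D_p` of solutions `y ∈ L_p(ℝ)` of `-y' + q y = f` with right-hand
side `f ∈ L_p(ℝ)` of unit norm. -/
def Dset (q : ℝ → ℝ) (p : ℝ≥0∞) : Set (ℝ → ℝ) :=
  {y | ∃ f : ℝ → ℝ, MemLp f p volume ∧ eLpNorm f p volume = 1 ∧
    IsSolution q f y ∧ MemLp y p volume}

namespace Stmt17Aux

/-- Continuous approximation in L¹ on an interval. -/
lemma cont_approx {h : ℝ → ℝ} (hint : ∀ u v : ℝ, IntervalIntegrable h volume u v)
    (a b : ℝ) {η : ℝ} (hη : 0 < η) :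
    ∃ g : ℝ → ℝ, Continuous g ∧
      ∀ u v : ℝ, a ≤ u → u ≤ v → v ≤ b → (∫ t in u..v, |h t - g t|) ≤ η := by
  have hIoc : IntegrableOn h (Set.Ioc a b) volume := (hint a b).1
  have hh' : Integrable ((Set.Ioc a b).indicator h) volume :=
    (integrable_indicator_iff measurableSet_Ioc).2 hIoc
  obtain ⟨g, -, hclose, hcont, hgint⟩ := hh'.exists_hasCompactSupport_integral_sub_le hη
  refine ⟨g, hcont, fun u v hau huv hvb => ?_⟩
  rw [intervalIntegral.integral_of_le huv]
  have step1 : (∫ t in Set.Ioc u v, |h t - g t|)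
      = ∫ t in Set.Ioc u v, ‖(Set.Ioc a b).indicator h t - g t‖ := by
    refine setIntegral_congr_fun measurableSet_Ioc (fun t ht => ?_)
    rw [Set.indicator_of_mem (Set.Ioc_subset_Ioc hau hvb ht), Real.norm_eq_abs]
  rw [step1]
  exact le_trans (setIntegral_le_integral ((hh'.sub hgint).norm)
    (Eventually.of_forall fun t => norm_nonneg _)) hclose

/-- FTC for `exp` of a primitive of a locally integrable function. -/
lemma ftc_exp {h H : ℝ → ℝ} (hint : ∀ u v : ℝ, IntervalIntegrable h volume u v)
    (hH : ∀ u v : ℝ, H v - H u = ∫ t in u..v, h t) (a b : ℝ) :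
    Real.exp (H b) - Real.exp (H a) = ∫ t in a..b, h t * Real.exp (H t) := by
  suffices main : ∀ u v : ℝ, u ≤ v →
      Real.exp (H v) - Real.exp (H u) = ∫ t in u..v, h t * Real.exp (H t) by
    rcases le_total a b with hab | hba
    · exact main a b hab
    · have h1 := main b a hba
      rw [intervalIntegral.integral_symm]
      linarith
  intro u v huv
  have hHc : Continuous H := by
    have hrep : H = fun t => H u + ∫ s in u..t, h s := by
      funext t; rw [← hH u t]; ring
    rw [hrep]
    exact continuous_const.add (intervalIntegral.continuous_primitive hint u)
  obtain ⟨M₀, hM₀⟩ :=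
    (isCompact_Icc (a := u) (b := v)).exists_bound_of_continuousOn hHc.continuousOn
  set M : ℝ := max M₀ (∫ t in u..v, |h t|) with hMdef
  have hM1 : ∀ t ∈ Set.Icc u v, |H t| ≤ M := fun t ht =>
    le_trans (by simpa [Real.norm_eq_abs] using hM₀ t ht) (le_max_left _ _)
  have hM2 : (∫ t in u..v, |h t|) ≤ M := le_max_right _ _
  have hM0 : 0 ≤ M := le_trans (abs_nonneg _) (hM1 u ⟨le_refl u, huv⟩)
  set X : ℝ := Real.exp (H v) - Real.exp (H u) - ∫ t in u..v, h t * Real.exp (H t) with hX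
  suffices hsmall : ∀ ε : ℝ, 0 < ε → |X| ≤ ε by
    have hX0 : X = 0 := by
      by_contra hne
      have h1 : 0 < |X| := abs_pos.2 hne
      have h2 := hsmall (|X| / 2) (by linarith)
      linarith
    rw [hX] at hX0; linarith
  intro ε hε
  set K : ℝ := (2 * M + 3) * Real.exp (M + 1) with hK
  have hKpos : 0 < K := by positivity
  set η : ℝ := min 1 (ε / K) with hηdef
  have hηpos : 0 < η := lt_min one_pos (div_pos hε hKpos)
  have hη1 : η ≤ 1 := min_le_left _ _
  have hηε : K * η ≤ ε := by
    have h1 : η ≤ ε / K := min_le_right _ _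
    calc K * η ≤ K * (ε / K) := by nlinarith
      _ = ε := by field_simp
  obtain ⟨g, hgc, hgclose⟩ := cont_approx hint u v hηpos
  set H₁ : ℝ → ℝ := fun t => H u + ∫ s in u..t, g s with hH₁def
  have hgii : ∀ p r : ℝ, IntervalIntegrable g volume p r := fun p r =>
    hgc.intervalIntegrable p r
  have hH₁deriv : ∀ t : ℝ, HasDerivAt H₁ (g t) t := fun t =>
    (intervalIntegral.integral_hasDerivAt_right (hgii u t)
      (hgc.stronglyMeasurableAtFilter _ _) hgc.continuousAt).const_add (H u)
  have hH₁cont : Continuous H₁ :=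
    continuous_const.add (intervalIntegral.continuous_primitive hgii u)
  have hftc : (∫ t in u..v, Real.exp (H₁ t) * g t) = Real.exp (H₁ v) - Real.exp (H₁ u) :=
    intervalIntegral.integral_eq_sub_of_hasDerivAt (fun t _ => (hH₁deriv t).exp)
      (((Real.continuous_exp.comp hH₁cont).mul hgc).intervalIntegrable u v)
  have hH₁u : H₁ u = H u := by simp [hH₁def]
  have hdiff : ∀ t ∈ Set.Icc u v, |H₁ t - H t| ≤ η := by
    intro t ht
    have h2 : H t = H u + ∫ s in u..t, h s := by rw [← hH u t]; ring
    have h1 : H₁ t - H t = ∫ s in u..t, (g s - h s) := by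
      rw [intervalIntegral.integral_sub (hgii u t) (hint u t), hH₁def, h2]; ring
    rw [h1]
    calc |∫ s in u..t, (g s - h s)| ≤ ∫ s in u..t, |g s - h s| :=
        intervalIntegral.abs_integral_le_integral_abs ht.1
      _ = ∫ s in u..t, |h s - g s| :=
        intervalIntegral.integral_congr (fun s _ => abs_sub_comm _ _)
      _ ≤ η := hgclose u t le_rfl ht.1 ht.2
  have hexpH₁le : ∀ t ∈ Set.Icc u v, Real.exp (H₁ t) ≤ Real.exp (M + 1) := by
    intro t ht
    apply Real.exp_le_exp.2
    have h1 := (abs_le.1 (hdiff t ht)).2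
    have h2 := (abs_le.1 (hM1 t ht)).2
    linarith
  have hexpdiff : ∀ t ∈ Set.Icc u v,
      |Real.exp (H₁ t) - Real.exp (H t)| ≤ 2 * Real.exp M * η := by
    intro t ht
    have key : H t + (H₁ t - H t) = H₁ t := by ring
    have h1 : Real.exp (H₁ t) - Real.exp (H t)
        = Real.exp (H t) * (Real.exp (H₁ t - H t) - 1) := by
      rw [mul_sub, mul_one, ← Real.exp_add, key]
    rw [h1, abs_mul, abs_of_nonneg (Real.exp_nonneg _)]
    have h2 : |Real.exp (H₁ t - H t) - 1| ≤ 2 * |H₁ t - H t| :=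
      Real.abs_exp_sub_one_le ((hdiff t ht).trans hη1)
    have h3 : Real.exp (H t) ≤ Real.exp M := Real.exp_le_exp.2 ((abs_le.1 (hM1 t ht)).2)
    have h4 := hdiff t ht
    have h5 := abs_nonneg (Real.exp (H₁ t - H t) - 1)
    nlinarith [Real.exp_pos (H t), Real.exp_pos M, abs_nonneg (H₁ t - H t)]
  have hii_int : IntervalIntegrable (fun t => h t * Real.exp (H t)) volume u v :=
    (hint u v).mul_continuousOn (Real.continuous_exp.comp hHc).continuousOn
  have hii_int1 : IntervalIntegrable (fun t => Real.exp (H₁ t) * g t) volume u v :=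
    ((Real.continuous_exp.comp hH₁cont).mul hgc).intervalIntegrable u v
  have hbound : |(∫ t in u..v, Real.exp (H₁ t) * g t) - ∫ t in u..v, h t * Real.exp (H t)|
      ≤ Real.exp (M + 1) * η + 2 * Real.exp M * η * M := by
    rw [← intervalIntegral.integral_sub hii_int1 hii_int]
    have habs : IntervalIntegrable
        (fun t => |Real.exp (H₁ t) * g t - h t * Real.exp (H t)|) volume u v :=
      (hii_int1.sub hii_int).abs
    have hrhsint : IntervalIntegrable
        (fun t => Real.exp (M + 1) * |h t - g t| + 2 * Real.exp M * η * |h t|) volume u v :=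
      (((hint u v).sub (hgii u v)).abs.const_mul _).add ((hint u v).abs.const_mul _)
    calc |∫ t in u..v, (Real.exp (H₁ t) * g t - h t * Real.exp (H t))|
        ≤ ∫ t in u..v, |Real.exp (H₁ t) * g t - h t * Real.exp (H t)| :=
          intervalIntegral.abs_integral_le_integral_abs huv
      _ ≤ ∫ t in u..v, (Real.exp (M + 1) * |h t - g t| + 2 * Real.exp M * η * |h t|) := by
          refine intervalIntegral.integral_mono_on huv habs hrhsint (fun t ht => ?_)
          have e1 : Real.exp (H₁ t) * g t - h t * Real.exp (H t)
              = (g t - h t) * Real.exp (H₁ t) + h t * (Real.exp (H₁ t) - Real.exp (H t)) := by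
            ring
          rw [e1]
          have h6 : |(g t - h t) * Real.exp (H₁ t) + h t * (Real.exp (H₁ t) - Real.exp (H t))|
              ≤ |g t - h t| * Real.exp (H₁ t) + |h t| * |Real.exp (H₁ t) - Real.exp (H t)| := by
            refine le_trans (abs_add_le _ _) ?_
            rw [abs_mul, abs_mul, abs_of_nonneg (Real.exp_nonneg _)]
          refine h6.trans ?_
          have h7 := hexpH₁le t ht
          have h8 := hexpdiff t ht
          have h9 : |g t - h t| = |h t - g t| := abs_sub_comm _ _
          rw [h9]
          have h10 := abs_nonneg (h t - g t)
          have h11 := abs_nonneg (h t)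
          have h12 := Real.exp_nonneg (H₁ t)
          nlinarith
      _ = Real.exp (M + 1) * (∫ t in u..v, |h t - g t|)
            + 2 * Real.exp M * η * (∫ t in u..v, |h t|) := by
          rw [intervalIntegral.integral_add (((hint u v).sub (hgii u v)).abs.const_mul _)
            ((hint u v).abs.const_mul _), intervalIntegral.integral_const_mul,
            intervalIntegral.integral_const_mul]
      _ ≤ Real.exp (M + 1) * η + 2 * Real.exp M * η * M := by
          have h13 := hgclose u v le_rfl huv le_rfl
          have h14 := hM2
          have h15 := Real.exp_nonneg (M + 1)
          have h16 := Real.exp_nonneg M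
          have c1 : Real.exp (M + 1) * (∫ t in u..v, |h t - g t|) ≤ Real.exp (M + 1) * η :=
            mul_le_mul_of_nonneg_left h13 h15
          have c2 : 2 * Real.exp M * η * (∫ t in u..v, |h t|) ≤ 2 * Real.exp M * η * M :=
            mul_le_mul_of_nonneg_left h14 (mul_nonneg (mul_nonneg two_pos.le h16) hηpos.le)
          linarith
  have hXeq : X = (Real.exp (H v) - Real.exp (H₁ v)) +
      ((∫ t in u..v, Real.exp (H₁ t) * g t) - ∫ t in u..v, h t * Real.exp (H t)) := by
    have h3 : Real.exp (H₁ u) = Real.exp (H u) := by rw [hH₁u]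
    rw [hX]; linarith [hftc]
  calc |X| ≤ |Real.exp (H v) - Real.exp (H₁ v)| +
      |(∫ t in u..v, Real.exp (H₁ t) * g t) - ∫ t in u..v, h t * Real.exp (H t)| := by
        rw [hXeq]; exact abs_add_le _ _
    _ ≤ 2 * Real.exp M * η + (Real.exp (M + 1) * η + 2 * Real.exp M * η * M) :=
        add_le_add (by rw [abs_sub_comm]; exact hexpdiff v ⟨huv, le_rfl⟩) hbound
    _ ≤ K * η := by
        rw [hK]
        have hee : Real.exp M ≤ Real.exp (M + 1) := Real.exp_le_exp.2 (by linarith)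
        have d1 : 0 ≤ 2 * η * (Real.exp (M + 1) - Real.exp M) :=
          mul_nonneg (mul_nonneg two_pos.le hηpos.le) (sub_nonneg.2 hee)
        have d2 : 0 ≤ 2 * (M * η) * (Real.exp (M + 1) - Real.exp M) :=
          mul_nonneg (mul_nonneg two_pos.le (mul_nonneg hM0 hηpos.le)) (sub_nonneg.2 hee)
        nlinarith [d1, d2]
    _ ≤ ε := hηε

/-- Product rule / integration by parts for primitives of locally integrable functions. -/
lemma ftc_mul {F G F' G' : ℝ → ℝ}
    (hF'i : ∀ u v : ℝ, IntervalIntegrable F' volume u v)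
    (hG'i : ∀ u v : ℝ, IntervalIntegrable G' volume u v)
    (hF : ∀ u v : ℝ, F v - F u = ∫ t in u..v, F' t)
    (hG : ∀ u v : ℝ, G v - G u = ∫ t in u..v, G' t) (a b : ℝ) :
    F b * G b - F a * G a = ∫ t in a..b, (F' t * G t + F t * G' t) := by
  suffices main : ∀ u v : ℝ, u ≤ v →
      F v * G v - F u * G u = ∫ t in u..v, (F' t * G t + F t * G' t) by
    rcases le_total a b with hab | hba
    · exact main a b hab
    · have h1 := main b a hba
      rw [intervalIntegral.integral_symm]
      linarith
  intro u v huv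
  have hFc : Continuous F := by
    have hrep : F = fun t => F u + ∫ s in u..t, F' s := by
      funext t; rw [← hF u t]; ring
    rw [hrep]
    exact continuous_const.add (intervalIntegral.continuous_primitive hF'i u)
  have hGc : Continuous G := by
    have hrep : G = fun t => G u + ∫ s in u..t, G' s := by
      funext t; rw [← hG u t]; ring
    rw [hrep]
    exact continuous_const.add (intervalIntegral.continuous_primitive hG'i u)
  obtain ⟨MF, hMF⟩ :=
    (isCompact_Icc (a := u) (b := v)).exists_bound_of_continuousOn hFc.continuousOn
  obtain ⟨MG, hMG⟩ :=
    (isCompact_Icc (a := u) (b := v)).exists_bound_of_continuousOn hGc.continuousOn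
  set M : ℝ := max (max MF MG) (max (∫ t in u..v, |F' t|) (∫ t in u..v, |G' t|)) with hMdef
  have hM1 : ∀ t ∈ Set.Icc u v, |F t| ≤ M := fun t ht =>
    le_trans (by simpa [Real.norm_eq_abs] using hMF t ht)
      (le_trans (le_max_left _ _) (le_max_left _ _))
  have hM2 : ∀ t ∈ Set.Icc u v, |G t| ≤ M := fun t ht =>
    le_trans (by simpa [Real.norm_eq_abs] using hMG t ht)
      (le_trans (le_max_right _ _) (le_max_left _ _))
  have hM3 : (∫ t in u..v, |F' t|) ≤ M := le_trans (le_max_left _ _) (le_max_right _ _)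
  have hM4 : (∫ t in u..v, |G' t|) ≤ M := le_trans (le_max_right _ _) (le_max_right _ _)
  have hM0 : 0 ≤ M := le_trans (abs_nonneg _) (hM1 u ⟨le_refl u, huv⟩)
  set X : ℝ := F v * G v - F u * G u - ∫ t in u..v, (F' t * G t + F t * G' t) with hX
  suffices hsmall : ∀ ε : ℝ, 0 < ε → |X| ≤ ε by
    have hX0 : X = 0 := by
      by_contra hne
      have h1 : 0 < |X| := abs_pos.2 hne
      have h2 := hsmall (|X| / 2) (by linarith)
      linarith
    rw [hX] at hX0; linarith
  intro ε hε
  set K : ℝ := 6 * M + 3 with hK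
  have hKpos : 0 < K := by positivity
  set η : ℝ := min 1 (ε / K) with hηdef
  have hηpos : 0 < η := lt_min one_pos (div_pos hε hKpos)
  have hη1 : η ≤ 1 := min_le_left _ _
  have hηε : K * η ≤ ε := by
    have h1 : η ≤ ε / K := min_le_right _ _
    calc K * η ≤ K * (ε / K) := by nlinarith
      _ = ε := by field_simp
  obtain ⟨g, hgc, hgclose⟩ := cont_approx hF'i u v hηpos
  obtain ⟨k, hkc, hkclose⟩ := cont_approx hG'i u v hηpos
  set F₁ : ℝ → ℝ := fun t => F u + ∫ s in u..t, g s with hF₁def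
  set G₁ : ℝ → ℝ := fun t => G u + ∫ s in u..t, k s with hG₁def
  have hgii : ∀ p r : ℝ, IntervalIntegrable g volume p r := fun p r =>
    hgc.intervalIntegrable p r
  have hkii : ∀ p r : ℝ, IntervalIntegrable k volume p r := fun p r =>
    hkc.intervalIntegrable p r
  have hF₁deriv : ∀ t : ℝ, HasDerivAt F₁ (g t) t := fun t =>
    (intervalIntegral.integral_hasDerivAt_right (hgii u t)
      (hgc.stronglyMeasurableAtFilter _ _) hgc.continuousAt).const_add (F u)
  have hG₁deriv : ∀ t : ℝ, HasDerivAt G₁ (k t) t := fun t =>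
    (intervalIntegral.integral_hasDerivAt_right (hkii u t)
      (hkc.stronglyMeasurableAtFilter _ _) hkc.continuousAt).const_add (G u)
  have hF₁cont : Continuous F₁ :=
    continuous_const.add (intervalIntegral.continuous_primitive hgii u)
  have hG₁cont : Continuous G₁ :=
    continuous_const.add (intervalIntegral.continuous_primitive hkii u)
  have hftc : (∫ t in u..v, (g t * G₁ t + F₁ t * k t)) = F₁ v * G₁ v - F₁ u * G₁ u :=
    intervalIntegral.integral_eq_sub_of_hasDerivAt
      (fun t _ => (hF₁deriv t).mul (hG₁deriv t))
      (((hgc.mul hG₁cont).add (hF₁cont.mul hkc)).intervalIntegrable u v)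
  have hF₁u : F₁ u = F u := by simp [hF₁def]
  have hG₁u : G₁ u = G u := by simp [hG₁def]
  have hdiffF : ∀ t ∈ Set.Icc u v, |F₁ t - F t| ≤ η := by
    intro t ht
    have h2 : F t = F u + ∫ s in u..t, F' s := by rw [← hF u t]; ring
    have h1 : F₁ t - F t = ∫ s in u..t, (g s - F' s) := by
      rw [intervalIntegral.integral_sub (hgii u t) (hF'i u t), hF₁def, h2]; ring
    rw [h1]
    calc |∫ s in u..t, (g s - F' s)| ≤ ∫ s in u..t, |g s - F' s| :=
        intervalIntegral.abs_integral_le_integral_abs ht.1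
      _ = ∫ s in u..t, |F' s - g s| :=
        intervalIntegral.integral_congr (fun s _ => abs_sub_comm _ _)
      _ ≤ η := hgclose u t le_rfl ht.1 ht.2
  have hdiffG : ∀ t ∈ Set.Icc u v, |G₁ t - G t| ≤ η := by
    intro t ht
    have h2 : G t = G u + ∫ s in u..t, G' s := by rw [← hG u t]; ring
    have h1 : G₁ t - G t = ∫ s in u..t, (k s - G' s) := by
      rw [intervalIntegral.integral_sub (hkii u t) (hG'i u t), hG₁def, h2]; ring
    rw [h1]
    calc |∫ s in u..t, (k s - G' s)| ≤ ∫ s in u..t, |k s - G' s| :=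
        intervalIntegral.abs_integral_le_integral_abs ht.1
      _ = ∫ s in u..t, |G' s - k s| :=
        intervalIntegral.integral_congr (fun s _ => abs_sub_comm _ _)
      _ ≤ η := hkclose u t le_rfl ht.1 ht.2
  have hF₁le : ∀ t ∈ Set.Icc u v, |F₁ t| ≤ M + 1 := by
    intro t ht
    have h1 := hdiffF t ht
    have h2 := hM1 t ht
    calc |F₁ t| = |F t + (F₁ t - F t)| := by ring_nf
      _ ≤ |F t| + |F₁ t - F t| := abs_add_le _ _
      _ ≤ M + 1 := by linarith
  have hG₁le : ∀ t ∈ Set.Icc u v, |G₁ t| ≤ M + 1 := by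
    intro t ht
    have h1 := hdiffG t ht
    have h2 := hM2 t ht
    calc |G₁ t| = |G t + (G₁ t - G t)| := by ring_nf
      _ ≤ |G t| + |G₁ t - G t| := abs_add_le _ _
      _ ≤ M + 1 := by linarith
  have hii_int : IntervalIntegrable (fun t => F' t * G t + F t * G' t) volume u v :=
    ((hF'i u v).mul_continuousOn hGc.continuousOn).add
      ((hG'i u v).continuousOn_mul hFc.continuousOn)
  have hii_int1 : IntervalIntegrable (fun t => g t * G₁ t + F₁ t * k t) volume u v :=
    ((hgc.mul hG₁cont).add (hF₁cont.mul hkc)).intervalIntegrable u v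
  have hbound : |(∫ t in u..v, (g t * G₁ t + F₁ t * k t))
      - ∫ t in u..v, (F' t * G t + F t * G' t)|
      ≤ (M + 1) * η + η * M + ((M + 1) * η + η * M) := by
    rw [← intervalIntegral.integral_sub hii_int1 hii_int]
    have hrhsint : IntervalIntegrable (fun t =>
        (M + 1) * |F' t - g t| + η * |F' t| + ((M + 1) * |G' t - k t| + η * |G' t|))
        volume u v :=
      ((((hF'i u v).sub (hgii u v)).abs.const_mul _).add ((hF'i u v).abs.const_mul _)).add
        ((((hG'i u v).sub (hkii u v)).abs.const_mul _).add ((hG'i u v).abs.const_mul _))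
    calc |∫ t in u..v, ((g t * G₁ t + F₁ t * k t) - (F' t * G t + F t * G' t))|
        ≤ ∫ t in u..v, |(g t * G₁ t + F₁ t * k t) - (F' t * G t + F t * G' t)| :=
          intervalIntegral.abs_integral_le_integral_abs huv
      _ ≤ ∫ t in u..v, ((M + 1) * |F' t - g t| + η * |F' t|
            + ((M + 1) * |G' t - k t| + η * |G' t|)) := by
          refine intervalIntegral.integral_mono_on huv (hii_int1.sub hii_int).abs hrhsint
            (fun t ht => ?_)
          have e1 : (g t * G₁ t + F₁ t * k t) - (F' t * G t + F t * G' t)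
              = ((g t - F' t) * G₁ t + F' t * (G₁ t - G t))
                + (F₁ t * (k t - G' t) + (F₁ t - F t) * G' t) := by ring
          have t1 : |(g t - F' t) * G₁ t| ≤ (M + 1) * |F' t - g t| := by
            rw [abs_mul, abs_sub_comm, mul_comm (M + 1)]
            exact mul_le_mul_of_nonneg_left (hG₁le t ht) (abs_nonneg _)
          have t2 : |F' t * (G₁ t - G t)| ≤ η * |F' t| := by
            rw [abs_mul, mul_comm η]
            exact mul_le_mul_of_nonneg_left (hdiffG t ht) (abs_nonneg _)
          have t3 : |F₁ t * (k t - G' t)| ≤ (M + 1) * |G' t - k t| := by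
            rw [abs_mul, abs_sub_comm]
            exact mul_le_mul_of_nonneg_right (hF₁le t ht) (abs_nonneg _)
          have t4 : |(F₁ t - F t) * G' t| ≤ η * |G' t| := by
            rw [abs_mul]
            exact mul_le_mul_of_nonneg_right (hdiffF t ht) (abs_nonneg _)
          rw [e1]
          calc |((g t - F' t) * G₁ t + F' t * (G₁ t - G t))
                + (F₁ t * (k t - G' t) + (F₁ t - F t) * G' t)|
              ≤ |(g t - F' t) * G₁ t| + |F' t * (G₁ t - G t)|
                + (|F₁ t * (k t - G' t)| + |(F₁ t - F t) * G' t|) := by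
                refine le_trans (abs_add_le _ _) (add_le_add (abs_add_le _ _) (abs_add_le _ _))
            _ ≤ (M + 1) * |F' t - g t| + η * |F' t|
                + ((M + 1) * |G' t - k t| + η * |G' t|) := by linarith
      _ = (M + 1) * (∫ t in u..v, |F' t - g t|) + η * (∫ t in u..v, |F' t|)
            + ((M + 1) * (∫ t in u..v, |G' t - k t|) + η * (∫ t in u..v, |G' t|)) := by
          rw [intervalIntegral.integral_add
              ((((hF'i u v).sub (hgii u v)).abs.const_mul _).add ((hF'i u v).abs.const_mul _))
              ((((hG'i u v).sub (hkii u v)).abs.const_mul _).add ((hG'i u v).abs.const_mul _)),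
            intervalIntegral.integral_add (((hF'i u v).sub (hgii u v)).abs.const_mul _)
              ((hF'i u v).abs.const_mul _),
            intervalIntegral.integral_add (((hG'i u v).sub (hkii u v)).abs.const_mul _)
              ((hG'i u v).abs.const_mul _),
            intervalIntegral.integral_const_mul, intervalIntegral.integral_const_mul,
            intervalIntegral.integral_const_mul, intervalIntegral.integral_const_mul]
      _ ≤ (M + 1) * η + η * M + ((M + 1) * η + η * M) := by
          have c1 : (M + 1) * (∫ t in u..v, |F' t - g t|) ≤ (M + 1) * η :=
            mul_le_mul_of_nonneg_left (hgclose u v le_rfl huv le_rfl) (by linarith)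
          have c2 : η * (∫ t in u..v, |F' t|) ≤ η * M :=
            mul_le_mul_of_nonneg_left hM3 hηpos.le
          have c3 : (M + 1) * (∫ t in u..v, |G' t - k t|) ≤ (M + 1) * η :=
            mul_le_mul_of_nonneg_left (hkclose u v le_rfl huv le_rfl) (by linarith)
          have c4 : η * (∫ t in u..v, |G' t|) ≤ η * M :=
            mul_le_mul_of_nonneg_left hM4 hηpos.le
          linarith
  have hlhs : |F v * G v - F₁ v * G₁ v| ≤ η * M + (M + 1) * η := by
    have e1 : F v * G v - F₁ v * G₁ v
        = (F v - F₁ v) * G v + F₁ v * (G v - G₁ v) := by ring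
    have hv : v ∈ Set.Icc u v := ⟨huv, le_refl v⟩
    have t1 : |(F v - F₁ v) * G v| ≤ η * M := by
      rw [abs_mul, abs_sub_comm]
      exact mul_le_mul (hdiffF v hv) (hM2 v hv) (abs_nonneg _) hηpos.le
    have t2 : |F₁ v * (G v - G₁ v)| ≤ (M + 1) * η := by
      rw [abs_mul, abs_sub_comm]
      exact mul_le_mul (hF₁le v hv) (hdiffG v hv) (abs_nonneg _) (by linarith)
    calc |F v * G v - F₁ v * G₁ v|
        ≤ |(F v - F₁ v) * G v| + |F₁ v * (G v - G₁ v)| := by rw [e1]; exact abs_add_le _ _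
      _ ≤ η * M + (M + 1) * η := by linarith
  have hXeq : X = (F v * G v - F₁ v * G₁ v) +
      ((∫ t in u..v, (g t * G₁ t + F₁ t * k t))
        - ∫ t in u..v, (F' t * G t + F t * G' t)) := by
    have h3 : F₁ u * G₁ u = F u * G u := by rw [hF₁u, hG₁u]
    rw [hX]; linarith [hftc]
  calc |X| ≤ |F v * G v - F₁ v * G₁ v| +
      |(∫ t in u..v, (g t * G₁ t + F₁ t * k t))
        - ∫ t in u..v, (F' t * G t + F t * G' t)| := by
        rw [hXeq]; exact abs_add_le _ _
    _ ≤ (η * M + (M + 1) * η) + ((M + 1) * η + η * M + ((M + 1) * η + η * M)) :=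
        add_le_add hlhs hbound
    _ ≤ K * η := by rw [hK]; nlinarith
    _ ≤ ε := hηε

/-- Linear-growth lower bound for the primitive of `q`. -/
lemma grow {q : ℝ → ℝ} (hq : ∀ x, 0 ≤ q x)
    (hqi : ∀ u v : ℝ, IntervalIntegrable q volume u v)
    {a c : ℝ} (ha : 0 < a) (hc0 : 0 ≤ c) (hc : ∀ z : ℝ, c ≤ ∫ t in z - a..z + a, q t) :
    ∀ s u : ℝ, s ≤ u → c / (2 * a) * (u - s) - c ≤ ∫ t in s..u, q t := by
  have h2a : 0 < 2 * a := by linarith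
  have hstep : ∀ n : ℕ, ∀ s : ℝ, (n : ℝ) * c ≤ ∫ t in s..(s + 2 * a * n), q t := by
    intro n
    induction n with
    | zero => intro s; simp
    | succ n ih =>
      intro s
      have h1 : (∫ t in s..(s + 2 * a * n), q t)
          + ∫ t in (s + 2 * a * n)..(s + 2 * a * (n + 1 : ℕ)), q t
          = ∫ t in s..(s + 2 * a * (n + 1 : ℕ)), q t :=
        intervalIntegral.integral_add_adjacent_intervals (hqi _ _) (hqi _ _)
      have h2 : c ≤ ∫ t in (s + 2 * a * n)..(s + 2 * a * (n + 1 : ℕ)), q t := by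
        have h3 := hc (s + 2 * a * n + a)
        have e1 : s + 2 * a * n + a - a = s + 2 * a * n := by ring
        have e2 : s + 2 * a * n + a + a = s + 2 * a * (n + 1 : ℕ) := by push_cast; ring
        rwa [e1, e2] at h3
      have h3 := ih s
      push_cast
      push_cast at h1 h2 h3
      linarith
  intro s u hsu
  set n : ℕ := ⌊(u - s) / (2 * a)⌋₊ with hn
  have hnle : (n : ℝ) ≤ (u - s) / (2 * a) :=
    Nat.floor_le (div_nonneg (by linarith) h2a.le)
  have hble : s + 2 * a * n ≤ u := by
    have h := (le_div_iff₀ h2a).mp hnle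
    linarith
  have h4 : (u - s) / (2 * a) - 1 < (n : ℝ) := Nat.sub_one_lt_floor _
  have h5 := hstep n s
  have h6 : (∫ t in s..(s + 2 * a * n), q t) + ∫ t in (s + 2 * a * n)..u, q t
      = ∫ t in s..u, q t :=
    intervalIntegral.integral_add_adjacent_intervals (hqi _ _) (hqi _ _)
  have h7 : 0 ≤ ∫ t in (s + 2 * a * n)..u, q t :=
    intervalIntegral.integral_nonneg hble (fun t _ => hq t)
  have h8 : c / (2 * a) * (u - s) - c ≤ (n : ℝ) * c := by
    have h9 : c / (2 * a) * (u - s) = c * ((u - s) / (2 * a)) := by ring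
    rw [h9]
    nlinarith
  linarith

/-- Every element of `D₁` is bounded by 1 pointwise. -/
lemma mem_D_abs_le {q : ℝ → ℝ} (hq : ∀ x, 0 ≤ q x) (hqloc : LocallyIntegrable q volume)
    {y : ℝ → ℝ} (hy : y ∈ Dset q 1) (x : ℝ) : |y x| ≤ 1 := by
  obtain ⟨f, hfmem, hfnorm, ⟨hsolloc, hsoleq⟩, hymem⟩ := hy
  have hfint : Integrable f volume := memLp_one_iff_integrable.mp hfmem
  have hyint : Integrable y volume := memLp_one_iff_integrable.mp hymem
  have hfabs : (∫ t, |f t|) = 1 := by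
    have h1 : ENNReal.ofReal (∫ t, ‖f t‖) = eLpNorm f 1 volume := by
      rw [MeasureTheory.eLpNorm_one_eq_lintegral_enorm]
      exact MeasureTheory.ofReal_integral_norm_eq_lintegral_enorm hfint
    rw [hfnorm] at h1
    have h2 : (∫ t, ‖f t‖) = 1 := by
      have h3 := ENNReal.ofReal_eq_one.mp h1
      exact h3
    simpa [Real.norm_eq_abs] using h2
  have hqi : ∀ u v : ℝ, IntervalIntegrable q volume u v := fun u v =>
    (hqloc.integrableOn_isCompact isCompact_uIcc).intervalIntegrable
  set Q : ℝ → ℝ := fun t => ∫ s in x..t, q s with hQdef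
  have hQid : ∀ u v : ℝ, Q v - Q u = ∫ t in u..v, q t := fun u v =>
    intervalIntegral.integral_interval_sub_left (hqi x v) (hqi x u)
  have hQx : Q x = 0 := intervalIntegral.integral_same
  have hQcont : Continuous Q := intervalIntegral.continuous_primitive hqi x
  set Em : ℝ → ℝ := fun t => Real.exp (-Q t) with hEmdef
  have hEmcont : Continuous Em := Real.continuous_exp.comp hQcont.neg
  have hnegQid : ∀ u v : ℝ, (fun t => -Q t) v - (fun t => -Q t) u
      = ∫ t in u..v, (fun s => -q s) t := by
    intro u v
    simp only []
    rw [intervalIntegral.integral_neg]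
    have := hQid u v
    linarith
  have hnegqi : ∀ u v : ℝ, IntervalIntegrable (fun s => -q s) volume u v := fun u v =>
    (hqi u v).neg
  have hEmid : ∀ u v : ℝ, Em v - Em u = ∫ t in u..v, (-q t * Em t) := by
    intro u v
    have h1 := ftc_exp hnegqi hnegQid u v
    simpa [hEmdef] using h1
  have hF'i : ∀ u v : ℝ, IntervalIntegrable (fun t => q t * y t - f t) volume u v :=
    fun u v => (hsolloc.integrableOn_isCompact isCompact_uIcc).intervalIntegrable
  have hG'i : ∀ u v : ℝ, IntervalIntegrable (fun t => -q t * Em t) volume u v := by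
    intro u v
    have h1 : IntervalIntegrable (fun t => -q t) volume u v := (hqi u v).neg
    exact h1.mul_continuousOn hEmcont.continuousOn
  have hkey : ∀ b : ℝ, y b * Em b - y x * Em x
      = ∫ t in x..b, ((q t * y t - f t) * Em t + y t * (-q t * Em t)) :=
    fun b => ftc_mul hF'i hG'i (fun u v => hsoleq u v) hEmid x b
  have hrep : ∀ b : ℝ, y x = y b * Em b + ∫ t in x..b, f t * Em t := by
    intro b
    have h1 := hkey b
    have h2 : Em x = 1 := by rw [hEmdef]; simp [hQx]
    rw [h2, mul_one] at h1
    have h3 : (∫ t in x..b, ((q t * y t - f t) * Em t + y t * (-q t * Em t)))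
        = ∫ t in x..b, (-(f t * Em t)) :=
      intervalIntegral.integral_congr (fun t _ => by ring)
    rw [h3, intervalIntegral.integral_neg] at h1
    linarith
  have hQnonneg : ∀ t, x ≤ t → 0 ≤ Q t := fun t ht =>
    intervalIntegral.integral_nonneg ht (fun s _ => hq s)
  have hEmle1 : ∀ t, x ≤ t → Em t ≤ 1 := by
    intro t ht
    rw [hEmdef]
    exact Real.exp_le_one_iff.2 (neg_nonpos.2 (hQnonneg t ht))
  have hEmpos : ∀ t, 0 < Em t := fun t => Real.exp_pos _
  have hbnd : ∀ b : ℝ, x ≤ b → |y x| ≤ |y b| + 1 := by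
    intro b hxb
    have h1 := hrep b
    have hfEmii : IntervalIntegrable (fun t => f t * Em t) volume x b :=
      hfint.intervalIntegrable.mul_continuousOn hEmcont.continuousOn
    have h2 : |∫ t in x..b, f t * Em t| ≤ ∫ t in x..b, |f t| := by
      calc |∫ t in x..b, f t * Em t| ≤ ∫ t in x..b, |f t * Em t| :=
            intervalIntegral.abs_integral_le_integral_abs hxb
        _ ≤ ∫ t in x..b, |f t| := by
            refine intervalIntegral.integral_mono_on hxb hfEmii.abs
              hfint.intervalIntegrable.abs (fun t ht => ?_)
            rw [abs_mul, abs_of_pos (hEmpos t)]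
            calc |f t| * Em t ≤ |f t| * 1 :=
                mul_le_mul_of_nonneg_left (hEmle1 t ht.1) (abs_nonneg _)
              _ = |f t| := mul_one _
    have h3 : (∫ t in x..b, |f t|) ≤ 1 := by
      rw [intervalIntegral.integral_of_le hxb, ← hfabs]
      exact setIntegral_le_integral hfint.abs (Eventually.of_forall fun t => abs_nonneg _)
    have h4 : |y b * Em b| ≤ |y b| := by
      rw [abs_mul, abs_of_pos (hEmpos b)]
      calc |y b| * Em b ≤ |y b| * 1 := mul_le_mul_of_nonneg_left (hEmle1 b hxb) (abs_nonneg _)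
        _ = |y b| := mul_one _
    calc |y x| = |y b * Em b + ∫ t in x..b, f t * Em t| := by rw [← h1]
      _ ≤ |y b * Em b| + |∫ t in x..b, f t * Em t| := abs_add_le _ _
      _ ≤ |y b| + 1 := by linarith
  have hsmally : ∀ ε : ℝ, 0 < ε → ∃ b, x ≤ b ∧ |y b| ≤ ε := by
    intro ε hε
    by_contra hcon
    push_neg at hcon
    have hconst : IntegrableOn (fun _ : ℝ => ε) (Set.Ioi x) volume := by
      refine Integrable.mono' hyint.abs.integrableOn aestronglyMeasurable_const ?_
      filter_upwards [ae_restrict_mem measurableSet_Ioi] with t ht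
      rw [Real.norm_eq_abs, abs_of_pos hε]
      exact (hcon t (le_of_lt ht)).le
    have := (integrable_const_iff (c := ε)).mp hconst
    rcases this with h | h
    · exact hε.ne' h
    · rw [isFiniteMeasure_restrict, Real.volume_Ioi] at h
      exact (h rfl).elim
  by_contra hgt
  push_neg at hgt
  obtain ⟨b, hxb, hyb⟩ := hsmally ((|y x| - 1) / 2) (by linarith)
  have := hbnd b hxb
  linarith

/-- Construction of a near-extremal element of `D₁`. -/
lemma exists_good (q : ℝ → ℝ) (hq : ∀ x, 0 ≤ q x) (hqloc : LocallyIntegrable q volume)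
    (a : ℝ) (ha : 0 < a) (hqa : 0 < ⨅ z : ℝ, ∫ t in z - a..z + a, q t)
    (x ε : ℝ) (hε : 0 < ε) :
    ∃ y ∈ Dset q 1, 1 - ε ≤ |y x| := by
  have hqi : ∀ u v : ℝ, IntervalIntegrable q volume u v := fun u v =>
    (hqloc.integrableOn_isCompact isCompact_uIcc).intervalIntegrable
  set c : ℝ := ⨅ z : ℝ, ∫ t in z - a..z + a, q t with hcdef
  have hbdd : BddBelow (Set.range fun z : ℝ => ∫ t in z - a..z + a, q t) := by
    refine ⟨0, ?_⟩
    rintro _ ⟨z, rfl⟩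
    exact intervalIntegral.integral_nonneg (by linarith) (fun t _ => hq t)
  have hc : ∀ z : ℝ, c ≤ ∫ t in z - a..z + a, q t := fun z => ciInf_le hbdd z
  have hcpos : 0 < c := hqa
  set k : ℝ := c / (2 * a) with hkdef
  have hk : 0 < k := div_pos hcpos (by linarith)
  have hgrow := grow hq hqi ha hcpos.le hc
  -- the primitive of q based at x
  set Q : ℝ → ℝ := fun t => ∫ s in x..t, q s with hQdef
  have hQid : ∀ u v : ℝ, Q v - Q u = ∫ t in u..v, q t := fun u v =>
    intervalIntegral.integral_interval_sub_left (hqi x v) (hqi x u)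
  have hQx : Q x = 0 := intervalIntegral.integral_same
  have hQcont : Continuous Q := intervalIntegral.continuous_primitive hqi x
  -- choose d with ∫_x^{x+d} q ≤ ε
  obtain ⟨d, hd0, hQd⟩ : ∃ d : ℝ, 0 < d ∧ Q (x + d) ≤ ε := by
    obtain ⟨δ, hδ0, hδ⟩ := Metric.continuousAt_iff.mp (hQcont.continuousAt (x := x)) ε hε
    refine ⟨δ / 2, by linarith, ?_⟩
    have h1 : dist (x + δ / 2) x < δ := by
      rw [Real.dist_eq]; rw [abs_of_pos (by linarith : (0:ℝ) < x + δ/2 - x)]; linarith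
    have h2 := hδ h1
    rw [Real.dist_eq, hQx, sub_zero] at h2
    exact (le_abs_self _).trans h2.le
  set w : ℝ → ℝ := (Set.Ioc x (x + d)).indicator (fun _ => d⁻¹) with hwdef
  have hwnn : ∀ t, 0 ≤ w t := fun t =>
    Set.indicator_nonneg (fun _ _ => by positivity) t
  have hwint : Integrable w volume := by
    rw [hwdef, integrable_indicator_iff measurableSet_Ioc]
    exact integrableOn_const measure_Ioc_lt_top.ne
  have hvol : (volume (Set.Ioc x (x + d))).toReal = d := by
    rw [Real.volume_Ioc]
    simp [ENNReal.toReal_ofReal hd0.le]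
  have hwnorm : (∫ t, w t) = 1 := by
    rw [hwdef, MeasureTheory.integral_indicator_const _ measurableSet_Ioc, measureReal_def, hvol]
    simp [mul_inv_cancel₀ hd0.ne']
  have heLp : eLpNorm w 1 volume = 1 := by
    have h1 : ENNReal.ofReal (∫ t, ‖w t‖) = eLpNorm w 1 volume := by
      rw [MeasureTheory.eLpNorm_one_eq_lintegral_enorm]
      exact MeasureTheory.ofReal_integral_norm_eq_lintegral_enorm hwint
    have h2 : (fun t => ‖w t‖) = w := funext fun t => by
      rw [Real.norm_eq_abs, abs_of_nonneg (hwnn t)]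
    rw [h2, hwnorm, ENNReal.ofReal_one] at h1
    exact h1.symm
  set E : ℝ → ℝ := fun t => Real.exp (Q t) with hEdef
  set Em : ℝ → ℝ := fun t => Real.exp (-Q t) with hEmdef
  have hEcont : Continuous E := Real.continuous_exp.comp hQcont
  have hEmcont : Continuous Em := Real.continuous_exp.comp hQcont.neg
  have hEEm : ∀ t, E t * Em t = 1 := fun t => by
    rw [hEdef, hEmdef, ← Real.exp_add]; simp
  -- w * Em is integrable
  have hwEm_eq : (fun t => w t * Em t)
      = (Set.Ioc x (x + d)).indicator (fun t => d⁻¹ * Em t) := by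
    funext t
    by_cases h : t ∈ Set.Ioc x (x + d)
    · rw [hwdef, Set.indicator_of_mem h, Set.indicator_of_mem h]
    · rw [hwdef, Set.indicator_of_notMem h, Set.indicator_of_notMem h, zero_mul]
  have hwEm_int : Integrable (fun t => w t * Em t) volume := by
    rw [hwEm_eq, integrable_indicator_iff measurableSet_Ioc]
    exact ((continuous_const.mul hEmcont).continuousOn.integrableOn_Icc).mono_set
      Set.Ioc_subset_Icc_self
  set V : ℝ → ℝ := fun s => ∫ t in s..(x + d), w t * Em t with hVdef
  have hVid : ∀ u v : ℝ, V v - V u = ∫ t in u..v, (-(w t * Em t)) := by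
    intro u v
    have h1 := intervalIntegral.integral_add_adjacent_intervals
      (hwEm_int.intervalIntegrable (a := u) (b := v))
      (hwEm_int.intervalIntegrable (a := v) (b := x + d))
    rw [intervalIntegral.integral_neg]
    simp only [hVdef]
    linarith
  have hVcont : Continuous V := by
    have h1 : V = fun s => -∫ t in (x + d)..s, w t * Em t := by
      funext s
      rw [hVdef]
      simp only []
      rw [intervalIntegral.integral_symm]
    rw [h1]
    exact (hwEm_int.continuous_primitive (x + d)).neg
  set y₀ : ℝ → ℝ := fun s => E s * V s with hy₀def
  have hy₀cont : Continuous y₀ := hEcont.mul hVcont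
  -- the solution identity
  have hEid : ∀ u v : ℝ, E v - E u = ∫ t in u..v, q t * E t := fun u v =>
    ftc_exp hqi hQid u v
  have hF'i : ∀ u v : ℝ, IntervalIntegrable (fun t => q t * E t) volume u v :=
    fun u v => (hqi u v).mul_continuousOn hEcont.continuousOn
  have hG'i : ∀ u v : ℝ, IntervalIntegrable (fun t => -(w t * Em t)) volume u v :=
    fun u v => hwEm_int.neg.intervalIntegrable
  have hsol_eq : ∀ u v : ℝ, y₀ v - y₀ u = ∫ t in u..v, (q t * y₀ t - w t) := by
    intro u v
    have h1 := ftc_mul hF'i hG'i hEid hVid u v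
    have h2 : ∀ t : ℝ, q t * E t * V t + E t * (-(w t * Em t)) = q t * y₀ t - w t := by
      intro t
      have h3 := hEEm t
      simp only [hy₀def]
      linear_combination (-(w t)) * h3
    rw [intervalIntegral.integral_congr (fun t _ => h2 t)] at h1
    exact h1
  have hsol_loc : LocallyIntegrable (fun t => q t * y₀ t - w t) volume := by
    rw [MeasureTheory.locallyIntegrable_iff]
    intro K hK
    have h1 : IntegrableOn (fun t => q t * y₀ t) K volume := by
      obtain ⟨C, hC⟩ := hK.exists_bound_of_continuousOn hy₀cont.continuousOn
      refine Integrable.mono' ((hqloc.integrableOn_isCompact hK).const_mul (max C 0)) ?_ ?_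
      · exact (hqloc.aestronglyMeasurable.restrict).mul
          hy₀cont.aestronglyMeasurable.restrict
      · filter_upwards [ae_restrict_mem hK.measurableSet] with t ht
        rw [Real.norm_eq_abs, abs_mul, abs_of_nonneg (hq t)]
        have h2 : |y₀ t| ≤ max C 0 := le_trans (by simpa [Real.norm_eq_abs] using hC t ht)
          (le_max_left _ _)
        calc q t * |y₀ t| ≤ q t * max C 0 := mul_le_mul_of_nonneg_left h2 (hq t)
          _ = max C 0 * q t := mul_comm _ _
    exact h1.sub hwint.integrableOn
  -- integrability of y₀
  have hVconst : ∀ s : ℝ, s ≤ x → V s = V x := by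
    intro s hs
    have h1 := hVid s x
    have h2 : (∫ t in s..x, (-(w t * Em t))) = 0 := by
      rw [intervalIntegral.integral_of_le hs]
      have h3 : ∀ t ∈ Set.Ioc s x, -(w t * Em t) = 0 := by
        intro t ht
        have h4 : t ∉ Set.Ioc x (x + d) := fun hmem => absurd hmem.1 (not_lt.2 ht.2)
        rw [hwdef]
        simp [Set.indicator_of_notMem h4]
      rw [setIntegral_congr_fun measurableSet_Ioc h3]
      simp
    rw [h2] at h1
    linarith
  have hzero : ∀ s : ℝ, x + d < s → y₀ s = 0 := by
    intro s hs
    have h1 : V s = 0 := by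
      rw [hVdef]
      simp only []
      rw [intervalIntegral.integral_symm, intervalIntegral.integral_of_le hs.le]
      have h3 : ∀ t ∈ Set.Ioc (x + d) s, w t * Em t = 0 := by
        intro t ht
        have h4 : t ∉ Set.Ioc x (x + d) := fun hmem => absurd ht.1 (not_lt.2 hmem.2)
        rw [hwdef]
        simp [Set.indicator_of_notMem h4]
      rw [setIntegral_congr_fun measurableSet_Ioc h3]
      simp
    rw [hy₀def]
    simp [h1]
  have hQs : ∀ s : ℝ, s ≤ x → Q s ≤ c - k * (x - s) := by
    intro s hs
    have h1 := hgrow s x hs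
    have h2 : Q x - Q s = ∫ t in s..x, q t := hQid s x
    rw [hQx] at h2
    rw [hkdef]
    linarith
  have hexpint : IntegrableOn (fun s => Real.exp (k * s)) (Set.Iic x) volume := by
    have base : Integrable ((Set.Iic (k * x)).indicator Real.exp) volume :=
      (integrable_indicator_iff measurableSet_Iic).2 (integrableOn_exp_Iic (k * x))
    have comp : Integrable (fun s => ((Set.Iic (k * x)).indicator Real.exp) (k * s)) volume :=
      (MeasureTheory.integrable_comp_mul_left_iff _ hk.ne').2 base
    have heq : (fun s => ((Set.Iic (k * x)).indicator Real.exp) (k * s))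
        = (Set.Iic x).indicator (fun s => Real.exp (k * s)) := by
      funext s
      by_cases h : s ≤ x
      · have h2 : k * s ≤ k * x := mul_le_mul_of_nonneg_left h hk.le
        simp [Set.indicator_apply, Set.mem_Iic, h, h2]
      · have h2 : ¬ (k * s ≤ k * x) := fun hm => h (le_of_mul_le_mul_left hm hk)
        simp [Set.indicator_apply, Set.mem_Iic, h, h2]
    rw [heq] at comp
    exact (integrable_indicator_iff measurableSet_Iic).1 comp
  have hIic : IntegrableOn y₀ (Set.Iic x) volume := by
    set B : ℝ := |V x| * Real.exp c * Real.exp (-(k * x)) with hBdef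
    refine Integrable.mono' ((hexpint.const_mul B)) hy₀cont.aestronglyMeasurable.restrict ?_
    filter_upwards [ae_restrict_mem measurableSet_Iic] with s hs
    have h1 : V s = V x := hVconst s hs
    have h2 : Q s ≤ c + k * s - k * x := by
      have := hQs s hs; linarith [this]
    have h3 : E s ≤ Real.exp c * Real.exp (-(k * x)) * Real.exp (k * s) := by
      rw [hEdef]
      simp only []
      rw [← Real.exp_add, ← Real.exp_add]
      exact Real.exp_le_exp.2 (by linarith)
    rw [Real.norm_eq_abs, hy₀def]
    simp only []
    rw [h1, abs_mul, abs_of_pos (Real.exp_pos _)]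
    calc E s * |V x| ≤ (Real.exp c * Real.exp (-(k * x)) * Real.exp (k * s)) * |V x| :=
          mul_le_mul_of_nonneg_right h3 (abs_nonneg _)
      _ = B * Real.exp (k * s) := by rw [hBdef]; ring
  have hIoc : IntegrableOn y₀ (Set.Ioc x (x + d)) volume :=
    (hy₀cont.continuousOn.integrableOn_Icc).mono_set Set.Ioc_subset_Icc_self
  have hIoi : IntegrableOn y₀ (Set.Ioi (x + d)) volume := by
    have h1 : Set.EqOn y₀ (fun _ => (0:ℝ)) (Set.Ioi (x + d)) := fun s hs => hzero s hs
    exact (integrableOn_congr_fun h1 measurableSet_Ioi).2 ((integrableOn_const_iff (C := (0:ℝ))).2 (Or.inl (by simp)))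
  have hy₀int : Integrable y₀ volume := by
    have hunion : Set.Iic x ∪ (Set.Ioc x (x + d) ∪ Set.Ioi (x + d)) = Set.univ := by
      ext t
      simp only [Set.mem_union, Set.mem_Iic, Set.mem_Ioc, Set.mem_Ioi, Set.mem_univ, iff_true]
      rcases le_or_gt t x with h | h
      · exact Or.inl h
      · rcases le_or_gt t (x + d) with h2 | h2
        · exact Or.inr (Or.inl ⟨h, h2⟩)
        · exact Or.inr (Or.inr h2)
    have h2 := hIic.union (hIoc.union hIoi)
    rw [hunion] at h2
    exact integrableOn_univ.1 h2
  -- the value at x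
  have hwint_interval : (∫ t in x..(x + d), w t) = 1 := by
    rw [intervalIntegral.integral_of_le (by linarith)]
    have h1 : ∀ t ∈ Set.Ioc x (x + d), w t = d⁻¹ := fun t ht => by
      rw [hwdef, Set.indicator_of_mem ht]
    rw [setIntegral_congr_fun measurableSet_Ioc h1, setIntegral_const, measureReal_def, hvol, smul_eq_mul,
      mul_inv_cancel₀ hd0.ne']
  have hQt_le : ∀ t ∈ Set.Icc x (x + d), Q t ≤ ε := by
    intro t ht
    have h1 : Q (x + d) - Q t = ∫ s in t..(x + d), q s := hQid t (x + d)
    have h2 : 0 ≤ ∫ s in t..(x + d), q s :=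
      intervalIntegral.integral_nonneg ht.2 (fun s _ => hq s)
    linarith
  have hVx : Real.exp (-ε) ≤ V x := by
    have h1 : (∫ t in x..(x + d), Real.exp (-ε) * w t) ≤ ∫ t in x..(x + d), w t * Em t := by
      refine intervalIntegral.integral_mono_on (by linarith)
        (hwint.intervalIntegrable.const_mul _) hwEm_int.intervalIntegrable (fun t ht => ?_)
      have h2 : Real.exp (-ε) ≤ Em t := by
        rw [hEmdef]
        exact Real.exp_le_exp.2 (neg_le_neg (hQt_le t ht))
      calc Real.exp (-ε) * w t ≤ Em t * w t :=
            mul_le_mul_of_nonneg_right h2 (hwnn t)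
        _ = w t * Em t := mul_comm _ _
    rw [intervalIntegral.integral_const_mul, hwint_interval, mul_one] at h1
    exact h1
  have hy₀x : 1 - ε ≤ y₀ x := by
    have h1 : y₀ x = V x := by
      rw [hy₀def]
      simp only []
      rw [hEdef]
      simp [hQx]
    have h2 : 1 - ε ≤ Real.exp (-ε) := by
      have := Real.add_one_le_exp (-ε); linarith
    rw [h1]
    linarith [hVx]
  exact ⟨y₀, ⟨w, memLp_one_iff_integrable.mpr hwint, heLp, ⟨hsol_loc, hsol_eq⟩,
    memLp_one_iff_integrable.mpr hy₀int⟩, le_trans hy₀x (le_abs_self _)⟩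

end Stmt17Aux

theorem stmt17 (q : ℝ → ℝ) (hq : ∀ x, 0 ≤ q x)
    (hqloc : LocallyIntegrable q volume)
    (a : ℝ) (ha : 0 < a) (hqa : 0 < ⨅ z : ℝ, ∫ t in z - a..z + a, q t) :
    (∀ x : ℝ, sSup ((fun y : ℝ → ℝ => |y x|) '' Dset q 1) = 1) ∧
    ¬ (∀ ε : ℝ, 0 < ε → ∃ x₀ : ℝ, ∀ y ∈ Dset q 1,
        ∀ x : ℝ, x₀ ≤ |x| → |y x| ≤ ε) := by
  have hUB : ∀ y ∈ Dset q 1, ∀ x : ℝ, |y x| ≤ 1 := fun y hy x =>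
    Stmt17Aux.mem_D_abs_le hq hqloc hy x
  have hLB : ∀ x ε : ℝ, 0 < ε → ∃ y ∈ Dset q 1, 1 - ε ≤ |y x| := fun x ε hε =>
    Stmt17Aux.exists_good q hq hqloc a ha hqa x ε hε
  have hsup : ∀ x : ℝ, sSup ((fun y : ℝ → ℝ => |y x|) '' Dset q 1) = 1 := by
    intro x
    obtain ⟨y₁, hy₁, -⟩ := hLB x 1 one_pos
    have hne : ((fun y : ℝ → ℝ => |y x|) '' Dset q 1).Nonempty :=
      ⟨_, Set.mem_image_of_mem _ hy₁⟩
    have hub : ∀ v ∈ (fun y : ℝ → ℝ => |y x|) '' Dset q 1, v ≤ 1 := by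
      rintro v ⟨y, hy, rfl⟩
      exact hUB y hy x
    refine le_antisymm (csSup_le hne hub) ?_
    rw [le_csSup_iff ⟨1, hub⟩ hne]
    intro b hb
    by_contra hlt
    push_neg at hlt
    obtain ⟨y, hy, hyx⟩ := hLB x ((1 - b) / 2) (by linarith)
    have h1 := hb (Set.mem_image_of_mem (fun y : ℝ → ℝ => |y x|) hy)
    linarith
  refine ⟨hsup, ?_⟩
  intro hdecay
  obtain ⟨x₀, hx₀⟩ := hdecay (1 / 2) (by norm_num)
  set x : ℝ := |x₀| + 1 with hxdef
  obtain ⟨y, hy, hyx⟩ := hLB x (1 / 4) (by norm_num)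
  have hxpos : 0 < x := by positivity
  have h2 : x₀ ≤ |x| := by
    rw [abs_of_pos hxpos, hxdef]
    linarith [le_abs_self x₀]
  have h1 := hx₀ y hy x h2
  linarith
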